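/- Let r̃₁, r̃₂ : V' × V → V' × V be the linear maps defined by r̃ᵢ(v', v) = (rᵢ'(v') − rᵢ'(fᵢ(v)), rᵢ(v)). Then r̃₁ and r̃₂ are linear automorphisms of V' × V and they commute: r̃₁ ∘ r̃₂ = r̃₂ ∘ r̃₁. In particular they define a representation of ℤ × ℤ on V' × V in which the two standard generators act by r̃₁ and r̃₂. -/

import Mathlib

/-- Shear equivalence `(v', v) ↦ (v' - f v, v)`. -/
def shear (k : Type*) [Field k] (V V' : Type*) [AddCommGroup V] [Module k V]
    [AddCommGroup V'] [Module k V'] (f : V →ₗ[k] V') : (V' × V) ≃ₗ[k] (V' × V) :=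
  LinearEquiv.ofLinear
    (LinearMap.prod ((LinearMap.fst k V' V) - f.comp (LinearMap.snd k V' V)) (LinearMap.snd k V' V))
    (LinearMap.prod ((LinearMap.fst k V' V) + f.comp (LinearMap.snd k V' V)) (LinearMap.snd k V' V))
    (by ext x <;> simp) (by ext x <;> simp)

/-- In the setup of Lemma 3.1 of the paper: the maps
`r̃ᵢ(v', v) = (rᵢ'(v') − rᵢ'(fᵢ(v)), rᵢ(v))` are linear automorphisms of `V' × V`,
they commute, and hence define a representation of `ℤ × ℤ` on `V' × V` in which
the two standard generators act by `r̃₁` and `r̃₂`. -/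
theorem stmt0 (k : Type*) [Field k] [CharZero k]
    (V V' : Type*) [AddCommGroup V] [Module k V] [AddCommGroup V'] [Module k V']
    (r₁ r₂ : V ≃ₗ[k] V) (r₁' r₂' : V' ≃ₗ[k] V')
    (hr : ∀ v, r₁ (r₂ v) = r₂ (r₁ v)) (hr' : ∀ v', r₁' (r₂' v') = r₂' (r₁' v'))
    (f₁ f₂ : V →ₗ[k] V')
    (hf₁ : ∀ v, r₂' (f₁ v) = f₁ (r₂ v)) (hf₂ : ∀ v, r₁' (f₂ v) = f₂ (r₁ v)) :
    ∃ e₁ e₂ : (V' × V) ≃ₗ[k] (V' × V),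
      (∀ v' v, e₁ (v', v) = (r₁' v' - r₁' (f₁ v), r₁ v)) ∧
      (∀ v' v, e₂ (v', v) = (r₂' v' - r₂' (f₂ v), r₂ v)) ∧
      (∀ x, e₁ (e₂ x) = e₂ (e₁ x)) ∧
      ∃ ρ : Multiplicative (ℤ × ℤ) →* ((V' × V) ≃ₗ[k] (V' × V)),
        ρ (Multiplicative.ofAdd (1, 0)) = e₁ ∧ ρ (Multiplicative.ofAdd (0, 1)) = e₂ := by
  set e₁ : (V' × V) ≃ₗ[k] (V' × V) := (shear k V V' f₁).trans (r₁'.prodCongr r₁) with he₁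
  set e₂ : (V' × V) ≃ₗ[k] (V' × V) := (shear k V V' f₂).trans (r₂'.prodCongr r₂) with he₂
  have h1 : ∀ v' v, e₁ (v', v) = (r₁' v' - r₁' (f₁ v), r₁ v) := by
    intro v' v; simp [he₁, shear, map_sub]
  have h2 : ∀ v' v, e₂ (v', v) = (r₂' v' - r₂' (f₂ v), r₂ v) := by
    intro v' v; simp [he₂, shear, map_sub]
  have hcomm : ∀ x, e₁ (e₂ x) = e₂ (e₁ x) := by
    rintro ⟨v', v⟩
    rw [h2, h1, h1, h2]
    ext
    · simp only [map_sub, ← hf₁, hf₂, hr']; abel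
    · exact hr v
  refine ⟨e₁, e₂, h1, h2, hcomm, ?_⟩
  have hc : Commute e₁ e₂ := LinearEquiv.ext fun x => hcomm x
  refine ⟨MonoidHom.mk' (fun x => e₁ ^ x.toAdd.1 * e₂ ^ x.toAdd.2) ?_, ?_, ?_⟩
  · rintro a b
    simp only [toAdd_mul, Prod.fst_add, Prod.snd_add, zpow_add]
    exact (hc.zpow_zpow _ _).mul_mul_mul_comm _ _
  · simp
  · simp
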